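/- For a bounded self-adjoint operator H and orthogonal projection P₀ with range 𝔓₀, one has ‖P₀ H P₀^⊥‖ ≤ ΔE_{𝔓₀}, where ΔE_{𝔓₀} = sup_{ψ∈𝔓₀, ‖ψ‖=1} (⟨H²ψ,ψ⟩ − ⟨Hψ,ψ⟩²)^{1/2}. -/

import Mathlib

open Real ContinuousLinearMap

/-- ‖P₀ H P₀^⊥‖ is bounded by the maximal energy dispersion
ΔE = sup over unit ψ ∈ 𝔓₀ of (⟨H²ψ,ψ⟩ − ⟨Hψ,ψ⟩²)^{1/2}. -/
theorem VHP_le_max_dispersion {E : Type*} [NormedAddCommGroup E]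
    [InnerProductSpace ℂ E] [CompleteSpace E]
    (H : E →L[ℂ] E) (hH : IsSelfAdjoint H)
    (K : Submodule ℂ E) [CompleteSpace K] (hK : K ≠ ⊥)
    (P₀ : E →L[ℂ] E) (hP₀ : P₀ = K.subtypeL ∘L K.orthogonalProjectionOnto) :
    ‖P₀ ∘L H ∘L (1 - P₀)‖ ≤
      sSup ((fun ψ : E =>
          Real.sqrt ((inner ℂ (H (H ψ)) ψ : ℂ).re - ((inner ℂ (H ψ) ψ : ℂ).re) ^ 2)) ''
        {ψ : E | ψ ∈ K ∧ ‖ψ‖ = 1}) := by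
  set f : E → ℝ := fun ψ =>
    Real.sqrt ((inner ℂ (H (H ψ)) ψ : ℂ).re - ((inner ℂ (H ψ) ψ : ℂ).re) ^ 2) with hf
  set S := f '' {ψ : E | ψ ∈ K ∧ ‖ψ‖ = 1} with hSdef
  -- S is nonempty
  obtain ⟨v, hvK, hv0⟩ := Submodule.exists_mem_ne_zero_of_ne_bot hK
  have hvnorm : ‖v‖ ≠ 0 := norm_ne_zero_iff.mpr hv0
  have huS : f ((‖v‖:ℂ)⁻¹ • v) ∈ S := by
    refine ⟨(‖v‖:ℂ)⁻¹ • v, ⟨K.smul_mem _ hvK, ?_⟩, rfl⟩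
    rw [norm_smul]
    simp [hvnorm]
  -- S is bounded above
  have hbdd : BddAbove S := by
    refine ⟨‖H‖, fun y hy => ?_⟩
    obtain ⟨ψ, ⟨hψK, hψ1⟩, rfl⟩ := hy
    have h1 : (inner ℂ (H (H ψ)) ψ : ℂ).re - ((inner ℂ (H ψ) ψ : ℂ).re) ^ 2
        ≤ ‖H‖ ^ 2 := by
      have h2 : (inner ℂ (H (H ψ)) ψ : ℂ).re ≤ ‖H‖ ^ 2 := by
        calc (inner ℂ (H (H ψ)) ψ : ℂ).re ≤ ‖(inner ℂ (H (H ψ)) ψ : ℂ)‖ :=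
              Complex.re_le_norm _
          _ ≤ ‖H (H ψ)‖ * ‖ψ‖ := norm_inner_le_norm _ _
          _ ≤ (‖H‖ * ‖H ψ‖) * ‖ψ‖ := by
              gcongr; exact H.le_opNorm _
          _ ≤ (‖H‖ * (‖H‖ * ‖ψ‖)) * ‖ψ‖ := by
              gcongr; exact H.le_opNorm _
          _ = ‖H‖ ^ 2 := by rw [hψ1]; ring
      nlinarith [sq_nonneg ((inner ℂ (H ψ) ψ : ℂ).re)]
    calc f ψ ≤ Real.sqrt (‖H‖ ^ 2) := Real.sqrt_le_sqrt h1
      _ = ‖H‖ := Real.sqrt_sq (norm_nonneg _)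
  have hM0 : 0 ≤ sSup S :=
    le_trans (Real.sqrt_nonneg _) (le_csSup hbdd huS)
  -- self-adjointness of P₀ and the adjoint trick
  have hPsa : IsSelfAdjoint P₀ := by
    rw [hP₀]; exact isSelfAdjoint_starProjection K
  have hQsa : IsSelfAdjoint (1 - P₀) := (IsSelfAdjoint.one (E →L[ℂ] E)).sub hPsa
  have hadj : ContinuousLinearMap.adjoint (P₀ ∘L H ∘L (1 - P₀))
      = (1 - P₀) ∘L H ∘L P₀ := by
    rw [adjoint_comp, adjoint_comp, hH.adjoint_eq, hPsa.adjoint_eq, hQsa.adjoint_eq]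
    rfl
  have hnorm : ‖P₀ ∘L H ∘L (1 - P₀)‖ = ‖(1 - P₀) ∘L H ∘L P₀‖ := by
    rw [← hadj, LinearIsometryEquiv.norm_map]
  rw [hnorm]
  -- key pointwise dispersion bound for unit vectors in K
  have key : ∀ u : E, u ∈ K → ‖u‖ = 1 → ‖H u - P₀ (H u)‖ ≤ f u := by
    intro u huK hu1
    set c : ℂ := inner ℂ u (H u) with hc
    have hcc : (starRingEnd ℂ) c = inner ℂ (H u) u := by
      rw [hc, ← inner_conj_symm]; simp
    have hPu : P₀ u = u := by
      rw [hP₀]; exact Submodule.starProjection_eq_self_iff.mpr huK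
    set w : E := H u - c • u with hw
    have hstep1 : H u - P₀ (H u) = w - P₀ w := by
      rw [hw]; rw [map_sub, map_smul, hPu]; abel
    have hstep2 : ‖w - P₀ w‖ ≤ ‖w‖ := by
      have : w - P₀ w = (Kᗮ.orthogonalProjectionOnto w : E) := by
        show w - P₀ w = Kᗮ.starProjection w
        rw [Submodule.starProjection_orthogonal_val, hP₀]; rfl
      rw [this]
      calc ‖(Kᗮ.orthogonalProjectionOnto w : E)‖
          ≤ ‖Kᗮ.orthogonalProjectionOnto‖ * ‖w‖ := (Kᗮ.orthogonalProjectionOnto).le_opNorm w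
        _ ≤ 1 * ‖w‖ :=
            mul_le_mul_of_nonneg_right (Submodule.orthogonalProjectionOnto_norm_le Kᗮ) (norm_nonneg _)
        _ = ‖w‖ := one_mul _
    have hsq : ‖w‖ ^ 2 = ‖H u‖ ^ 2 - Complex.normSq c := by
      rw [hw, @norm_sub_sq ℂ]
      have h1 : (inner ℂ (H u) (c • u) : ℂ) = c * inner ℂ (H u) u := inner_smul_right _ _ _
      have h2 : ‖c • u‖ = ‖c‖ := by rw [norm_smul, hu1, mul_one]
      rw [h1, h2, ← hcc]
      have e1 : (c * (starRingEnd ℂ) c).re = Complex.normSq c := by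
        rw [mul_comm, ← Complex.normSq_eq_conj_mul_self]; simp
      have e2 : ‖c‖ ^ 2 = Complex.normSq c := by
        rw [← Complex.sq_norm]
      simp only [RCLike.re_to_complex]
      rw [e1, e2]; ring
    have hHu : ‖H u‖ ^ 2 = (inner ℂ (H (H u)) u : ℂ).re := by
      have e3 : (inner ℂ (H (H u)) u : ℂ) = inner ℂ (H u) (H u) := hH.isSymmetric (H u) u
      rw [e3, ← inner_self_eq_norm_sq (𝕜 := ℂ) (H u), RCLike.re_to_complex]
    have hre : Complex.normSq c ≥ ((inner ℂ (H u) u : ℂ).re) ^ 2 := by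
      have h3 : (inner ℂ (H u) u : ℂ).re = c.re := by
        rw [← hcc, Complex.conj_re]
      rw [h3]
      nlinarith [Complex.normSq_apply c, sq_nonneg c.im]
    have hwle : ‖w‖ ^ 2 ≤ (inner ℂ (H (H u)) u : ℂ).re - ((inner ℂ (H u) u : ℂ).re) ^ 2 := by
      rw [hsq, hHu]; linarith
    rw [hstep1]
    calc ‖w - P₀ w‖ ≤ ‖w‖ := hstep2
      _ = Real.sqrt (‖w‖ ^ 2) := (Real.sqrt_sq (norm_nonneg _)).symm
      _ ≤ f u := Real.sqrt_le_sqrt hwle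
  -- operator norm bound
  refine ContinuousLinearMap.opNorm_le_bound _ hM0 fun x => ?_
  set ψ : E := P₀ x with hψ
  have hψK : ψ ∈ K := by rw [hψ, hP₀]; exact (K.orthogonalProjectionOnto x).2
  have hψle : ‖ψ‖ ≤ ‖x‖ := by
    rw [hψ, hP₀]
    calc ‖(K.subtypeL ∘L K.orthogonalProjectionOnto) x‖
        = ‖K.orthogonalProjectionOnto x‖ := rfl
      _ ≤ ‖K.orthogonalProjectionOnto‖ * ‖x‖ := (K.orthogonalProjectionOnto).le_opNorm x
      _ ≤ 1 * ‖x‖ :=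
          mul_le_mul_of_nonneg_right (Submodule.orthogonalProjectionOnto_norm_le K) (norm_nonneg _)
      _ = ‖x‖ := one_mul _
  have happ : ((1 - P₀) ∘L H ∘L P₀) x = H ψ - P₀ (H ψ) := by
    simp [hψ, sub_apply]
  rw [happ]
  by_cases hψ0 : ψ = 0
  · rw [hψ0]
    simp only [map_zero, sub_zero, norm_zero]
    positivity
  · have hψn : ‖ψ‖ ≠ 0 := norm_ne_zero_iff.mpr hψ0
    set u : E := (‖ψ‖:ℂ)⁻¹ • ψ with hu
    have huK : u ∈ K := K.smul_mem _ hψK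
    have hu1 : ‖u‖ = 1 := by rw [hu, norm_smul]; simp [hψn]
    have hdecomp : H ψ - P₀ (H ψ) = (‖ψ‖:ℂ) • (H u - P₀ (H u)) := by
      have : ψ = (‖ψ‖:ℂ) • u := by
        rw [hu, smul_smul]
        rw [mul_inv_cancel₀ (by exact_mod_cast hψn), one_smul]
      rw [smul_sub, ← map_smul, ← map_smul, ← map_smul, ← this]
    rw [hdecomp, norm_smul]
    have h5 : ‖(‖ψ‖:ℂ)‖ = ‖ψ‖ := by simp
    rw [h5]
    have hfu : f u ≤ sSup S := le_csSup hbdd ⟨u, ⟨huK, hu1⟩, rfl⟩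
    calc ‖ψ‖ * ‖H u - P₀ (H u)‖ ≤ ‖ψ‖ * f u := by
          gcongr; exact key u huK hu1
      _ ≤ ‖x‖ * sSup S := by
          apply mul_le_mul hψle hfu (le_trans (norm_nonneg _) (key u huK hu1)) (norm_nonneg _)
      _ = sSup S * ‖x‖ := mul_comm _ _
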